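/- Let G, H have commuting actions on X, and γ: H × X → K^× satisfy condition (4). Then the function δ: H × H → K^× defined (for nonempty X, picking any x₀ ∈ X) by δ(θ,η) = γ(θ, η·x₀)·γ(θη, x₀)⁻¹·γ(η, x₀) is a 2-cocycle on H: δ(θ₁,θ₂)·δ(θ₁θ₂,θ₃) = δ(θ₁,θ₂θ₃)·δ(θ₂,θ₃) for all θ₁,θ₂,θ₃ ∈ H. -/

import Mathlib

/-- δ defined from γ via a basepoint is a 2-cocycle on H. -/
theorem stmt14 {G H X : Type*} [Group G] [Group H] {K : Type*} [Field K]
    (actR : X → G → X) (actL : H → X → X)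
    (actL_mul : ∀ (η θ : H) x, actL (η * θ) x = actL η (actL θ x))
    (actL_one : ∀ x, actL 1 x = x)
    (comm : ∀ (η : H) x (g : G), actL η (actR x g) = actR (actL η x) g)
    (γ : H → X → Kˣ)
    (h4 : ∀ (x y : X) (η θ : H),
      γ θ (actL η y) * (γ (θ * η) y)⁻¹ * γ η y *
        (γ θ (actL η x))⁻¹ * γ (θ * η) x * (γ η x)⁻¹ = 1)
    (x₀ : X)
    (δ : H → H → Kˣ)
    (hδ : ∀ θ η, δ θ η = γ θ (actL η x₀) * (γ (θ * η) x₀)⁻¹ * γ η x₀) :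
    ∀ θ₁ θ₂ θ₃ : H, δ θ₁ θ₂ * δ (θ₁ * θ₂) θ₃ = δ θ₁ (θ₂ * θ₃) * δ θ₂ θ₃ := by
  intro θ₁ θ₂ θ₃
  have key := h4 x₀ (actL θ₃ x₀) θ₂ θ₁
  rw [Units.ext_iff] at key ⊢
  push_cast at key ⊢
  simp only [hδ, actL_mul, mul_assoc] at *
  push_cast
  field_simp at key ⊢
  linear_combination (-1 : K) * key
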